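/- arXiv:1504.05718 — 2 statements merged into one kernel-verified Lean document; each statement's English description precedes it below -/
import Mathlib

section
/- For every n ≥ 1, the Salajan discriminator satisfies n ≤ D_S(n) ≤ 2n − 1. -/
/-- The Salajan sequence: `u j = (3^j - 5*(-1)^j)/4`. -/
def salajanU (j : ℕ) : ℤ := ((3 : ℤ) ^ j - 5 * (-1) ^ j) / 4

/-- The Salajan discriminator: the least positive `m` such that `u 1, …, u n` are
pairwise incongruent modulo `m`. -/
noncomputable def salajanD (n : ℕ) : ℕ :=
  sInf {m : ℕ | 0 < m ∧ ∀ i j : ℕ, 1 ≤ i → i < j → j ≤ n →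
    ¬ (salajanU i ≡ salajanU j [ZMOD (m : ℤ)])}

lemma four_dvd_salajan (j : ℕ) : (4 : ℤ) ∣ (3 : ℤ) ^ j - 5 * (-1) ^ j := by
  induction j with
  | zero => norm_num
  | succ k ih =>
    obtain ⟨c, hc⟩ := ih
    refine ⟨3 * c + 5 * (-1) ^ k, ?_⟩
    have h3 : (3 : ℤ) ^ (k + 1) = 3 * 3 ^ k := by ring
    have h1 : (-1 : ℤ) ^ (k + 1) = -(-1) ^ k := by ring
    rw [h3, h1]
    linarith [hc]

lemma four_mul_salajanU (j : ℕ) : 4 * salajanU j = (3 : ℤ) ^ j - 5 * (-1) ^ j := by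
  unfold salajanU
  exact Int.mul_ediv_cancel' (four_dvd_salajan j)

lemma pow3_decomp (a : ℕ) : ∃ t : ℤ, (3 : ℤ) ^ (2 * a) = 1 + 8 * t := by
  induction a with
  | zero => exact ⟨0, by norm_num⟩
  | succ k ih =>
    obtain ⟨t, ht⟩ := ih
    refine ⟨1 + 9 * t, ?_⟩
    have : (3 : ℤ) ^ (2 * (k + 1)) = 9 * 3 ^ (2 * k) := by ring
    rw [this, ht]; ring

lemma odd_isCoprime_two_pow {y : ℤ} (hy : Odd y) (k : ℕ) : IsCoprime ((2 : ℤ) ^ k) y := by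
  obtain ⟨c, hc⟩ := hy
  have h2 : IsCoprime (2 : ℤ) y := ⟨-c, 1, by rw [hc]; ring⟩
  exact h2.pow_left

/-- The multiplicative order of `3` modulo `2^(e+2)` is `2^e`: no smaller positive
exponent `d` gives `3^d ≡ 1`. -/
lemma ord3 : ∀ e d : ℕ, 0 < d → d < 2 ^ e → ¬ ((2 : ℤ) ^ (e + 2) ∣ (3 : ℤ) ^ d - 1) := by
  intro e
  induction e with
  | zero => intro d hd hlt; omega
  | succ e ih =>
    intro d hd hlt hdvd
    rcases Nat.even_or_odd d with hde | hdo
    · -- d even: d = 2c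
      obtain ⟨c, hc⟩ := hde
      have hc' : d = 2 * c := by omega
      have hc0 : 0 < c := by omega
      have hclt : c < 2 ^ e := by
        have : 2 ^ (e + 1) = 2 * 2 ^ e := by ring
        omega
      have hfac : (3 : ℤ) ^ d - 1 = ((3 : ℤ) ^ c - 1) * ((3 : ℤ) ^ c + 1) := by
        rw [hc']
        have : (3 : ℤ) ^ (2 * c) = ((3 : ℤ) ^ c) ^ 2 := by ring
        rw [this]; ring
      rcases Nat.even_or_odd c with hce | hco
      · -- c even: 3^c + 1 = 2 * odd
        obtain ⟨b, hb⟩ := hce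
        obtain ⟨t, ht⟩ := pow3_decomp b
        have hc2 : (3 : ℤ) ^ c = 1 + 8 * t := by rw [show c = 2 * b by omega, ht]
        have hsplit : (3 : ℤ) ^ d - 1 = (2 : ℤ) * (((3 : ℤ) ^ c - 1) * (1 + 4 * t)) := by
          rw [hfac, hc2]; ring
        have h2e : (2 : ℤ) ^ (e + 1 + 2) = 2 * 2 ^ (e + 2) := by ring
        rw [hsplit, h2e] at hdvd
        have hdvd2 : (2 : ℤ) ^ (e + 2) ∣ ((3 : ℤ) ^ c - 1) * (1 + 4 * t) := by
          exact (mul_dvd_mul_iff_left (by norm_num : (2:ℤ) ≠ 0)).mp hdvd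
        have hodd : Odd (1 + 4 * t) := ⟨2 * t, by ring⟩
        have := (odd_isCoprime_two_pow hodd (e + 2)).dvd_of_dvd_mul_right hdvd2
        exact ih c hc0 hclt this
      · -- c odd: 3^c - 1 = 2*odd, 3^c + 1 = 4*odd, product = 8*odd
        obtain ⟨b, hb⟩ := hco
        obtain ⟨t, ht⟩ := pow3_decomp b
        have hc2 : (3 : ℤ) ^ c = 3 + 24 * t := by
          rw [hb, pow_add, pow_one, ht]; ring
        have hsplit : (3 : ℤ) ^ d - 1 = (8 : ℤ) * ((1 + 12 * t) * (1 + 6 * t)) := by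
          rw [hfac, hc2]; ring
        have h2e : (2 : ℤ) ^ (e + 1 + 2) = 8 * 2 ^ e := by rw [pow_add]; ring
        rw [hsplit, h2e] at hdvd
        have hdvd2 : (2 : ℤ) ^ e ∣ (1 + 12 * t) * (1 + 6 * t) := by
          exact (mul_dvd_mul_iff_left (by norm_num : (8:ℤ) ≠ 0)).mp hdvd
        rcases Nat.eq_zero_or_pos e with he | he
        · -- e = 0 : then d < 2 but d = 2c ≥ 2
          subst he
          have : d < 2 := by simpa using hlt
          omega
        · have h2 : (2 : ℤ) ∣ (1 + 12 * t) * (1 + 6 * t) :=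
            dvd_trans (dvd_pow_self 2 (by omega : e ≠ 0)) hdvd2
          obtain ⟨w, hw⟩ := h2
          have : (1 + 12 * t) * (1 + 6 * t) = 1 + 2 * (9 * t + 36 * t * t) := by ring
          omega
    · -- d odd: 3^d - 1 ≡ 2 mod 8
      obtain ⟨b, hb⟩ := hdo
      obtain ⟨t, ht⟩ := pow3_decomp b
      have hd2 : (3 : ℤ) ^ d = 3 + 24 * t := by
        rw [hb, pow_add, pow_one, ht]; ring
      have h8 : (8 : ℤ) ∣ (3 : ℤ) ^ d - 1 := by
        refine dvd_trans ?_ hdvd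
        have : (8 : ℤ) = 2 ^ 3 := by norm_num
        rw [this]
        exact pow_dvd_pow 2 (by omega)
      rw [hd2] at h8
      obtain ⟨w, hw⟩ := h8
      omega

/-- Any `2^e ≥ n` discriminates the first `n` Salajan terms. -/
lemma pow2_mem (e n : ℕ) (hne : n ≤ 2 ^ e) :
    (2 ^ e : ℕ) ∈ {m : ℕ | 0 < m ∧ ∀ i j : ℕ, 1 ≤ i → i < j → j ≤ n →
      ¬ (salajanU i ≡ salajanU j [ZMOD (m : ℤ)])} := by
  refine ⟨Nat.pow_pos (by norm_num), ?_⟩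
  intro i j hi hij hjn hmod
  set d := j - i with hdd
  have hd0 : 0 < d := by omega
  have hjd : j = i + d := by omega
  have hdlt : d < 2 ^ e := by omega
  -- from the congruence, 2^(e+2) divides 4*(u j - u i)
  have hdvd0 : ((2 : ℤ) ^ e) ∣ salajanU j - salajanU i := by
    have := hmod.dvd
    simpa [Nat.cast_pow] using this
  have hdvd : (2 : ℤ) ^ (e + 2) ∣ 4 * (salajanU j - salajanU i) := by
    obtain ⟨c, hc⟩ := hdvd0
    exact ⟨c, by rw [hc]; ring⟩
  set X : ℤ := 3 ^ i * (3 ^ d - 1) - 5 * (-1) ^ i * ((-1) ^ d - 1) with hX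
  have hXeq : 4 * (salajanU j - salajanU i) = X := by
    rw [mul_sub, four_mul_salajanU, four_mul_salajanU, hjd, hX]
    rw [pow_add, pow_add]
    ring
  rw [hXeq] at hdvd
  rcases Nat.even_or_odd d with hde | hdo
  · -- d even: reduces to order of 3
    have hneg : ((-1 : ℤ)) ^ d = 1 := hde.neg_one_pow
    have hX2 : X = 3 ^ i * (3 ^ d - 1) := by rw [hX, hneg]; ring
    rw [hX2] at hdvd
    have hodd3 : Odd ((3 : ℤ) ^ i) := (Int.odd_pow' (by omega)).mpr ⟨1, by norm_num⟩
    have h3 : Odd ((3 : ℤ) ^ i) := hodd3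
    have hcop : IsCoprime ((2 : ℤ) ^ (e + 2)) ((3 : ℤ) ^ i) :=
      odd_isCoprime_two_pow h3 (e + 2)
    have : (2 : ℤ) ^ (e + 2) ∣ (3 : ℤ) ^ d - 1 := by
      have := hcop.dvd_of_dvd_mul_left (by rwa [mul_comm] at hdvd)
      exact this
    exact ord3 e d hd0 hdlt this
  · -- d odd: X ≡ ±4 mod 8
    -- here j ≥ 2 so n ≥ 2 so e ≥ 1
    have he1 : 1 ≤ e := by
      by_contra h
      have : e = 0 := by omega
      subst this
      simp at hne
      omega
    have h8 : (8 : ℤ) ∣ X := by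
      refine dvd_trans ?_ hdvd
      have : (8 : ℤ) = 2 ^ 3 := by norm_num
      rw [this]
      exact pow_dvd_pow 2 (by omega)
    obtain ⟨b, hb⟩ := hdo
    obtain ⟨t, ht⟩ := pow3_decomp b
    have hd3 : (3 : ℤ) ^ d = 3 + 24 * t := by rw [hb, pow_add, pow_one, ht]; ring
    have hdn : ((-1 : ℤ)) ^ d = -1 := Odd.neg_one_pow ⟨b, hb⟩
    rcases Nat.even_or_odd i with hie | hio
    · obtain ⟨a, ha⟩ := hie
      obtain ⟨s, hs⟩ := pow3_decomp a
      have hi3 : (3 : ℤ) ^ i = 1 + 8 * s := by rw [show i = 2 * a by omega, hs]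
      have hin : ((-1 : ℤ)) ^ i = 1 := Even.neg_one_pow ⟨a, by omega⟩
      have hXval : X = 12 + 8 * (3 * t + 2 * s + 24 * s * t) := by
        rw [hX, hi3, hin, hd3, hdn]; ring
      obtain ⟨w, hw⟩ := h8
      omega
    · obtain ⟨a, ha⟩ := hio
      obtain ⟨s, hs⟩ := pow3_decomp a
      have hi3 : (3 : ℤ) ^ i = 3 + 24 * s := by rw [ha, pow_add, pow_one, hs]; ring
      have hin : ((-1 : ℤ)) ^ i = -1 := Odd.neg_one_pow ⟨a, ha⟩
      have hXval : X = -4 + 8 * (9 * t + 6 * s + 72 * s * t) := by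
        rw [hX, hi3, hin, hd3, hdn]; ring
      obtain ⟨w, hw⟩ := h8
      omega

/-- Pigeonhole: any member of the discriminating set is at least `n`. -/
lemma mem_ge (n m : ℕ)
    (hm : m ∈ {m : ℕ | 0 < m ∧ ∀ i j : ℕ, 1 ≤ i → i < j → j ≤ n →
      ¬ (salajanU i ≡ salajanU j [ZMOD (m : ℤ)])}) : n ≤ m := by
  obtain ⟨hm0, hinj⟩ := hm
  by_contra hlt
  push_neg at hlt
  haveI : NeZero m := ⟨by omega⟩
  have hinj' : Set.InjOn (fun i : ℕ => ((salajanU i : ZMod m))) (Finset.Icc 1 n) := by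
    intro i hi j hj hij
    simp only [Finset.coe_Icc, Set.mem_Icc] at hi hj
    by_contra hne
    rcases Nat.lt_or_ge i j with h | h
    · exact hinj i j hi.1 h hj.2 (by
        have := (ZMod.intCast_eq_intCast_iff (salajanU i) (salajanU j) m).mp hij
        simpa using this)
    · have h' : j < i := by omega
      exact hinj j i hj.1 h' hi.2 (by
        have := (ZMod.intCast_eq_intCast_iff (salajanU j) (salajanU i) m).mp hij.symm
        simpa using this)
  have hcard := Finset.card_le_card_of_injOn (fun i : ℕ => ((salajanU i : ZMod m)))
    (fun x _ => Finset.mem_univ ((fun i : ℕ => ((salajanU i : ZMod m))) x)) hinj'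
  rw [Nat.card_Icc] at hcard
  have huniv : (Finset.univ : Finset (ZMod m)).card = m := by
    rw [Finset.card_univ, ZMod.card]
  omega

theorem salajanD_bounds (n : ℕ) (hn : 1 ≤ n) :
    n ≤ salajanD n ∧ salajanD n ≤ 2 * n - 1 := by
  set S := {m : ℕ | 0 < m ∧ ∀ i j : ℕ, 1 ≤ i → i < j → j ≤ n →
    ¬ (salajanU i ≡ salajanU j [ZMOD (m : ℤ)])} with hS
  have hmem : (2 ^ Nat.clog 2 n : ℕ) ∈ S := pow2_mem _ n (Nat.le_pow_clog one_lt_two n)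
  have hne : S.Nonempty := ⟨_, hmem⟩
  constructor
  · exact mem_ge n _ (Nat.sInf_mem hne)
  · have hle : salajanD n ≤ 2 ^ Nat.clog 2 n := Nat.sInf_le hmem
    have hbound : 2 ^ Nat.clog 2 n ≤ 2 * n - 1 := by
      rcases Nat.lt_or_ge n 2 with h1 | h2
      · have : n = 1 := by omega
        subst this
        simp [Nat.clog]
      · have hpos : 0 < Nat.clog 2 n := Nat.clog_pos one_lt_two h2
        have hlt : 2 ^ (Nat.clog 2 n - 1) < n := Nat.pow_pred_clog_lt_self one_lt_two (by omega)
        have : 2 ^ Nat.clog 2 n = 2 * 2 ^ (Nat.clog 2 n - 1) := by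
          rw [← pow_succ']
          congr 1
          omega
        omega
    omega
end

section
/- If d_1, d_2 > 1 are coprime integers with 9 ∤ d_1 d_2, then ρ(d_1 d_2) = lcm(ρ(d_1), ρ(d_2)) ≤ ρ(d_1)ρ(d_2)/2 ≤ d_1 d_2 / 2, where ρ denotes the period of the Salajan sequence. -/
/-- The (eventual) minimal period of the Salajan sequence modulo `d`. -/
noncomputable def salajanRho (d : ℕ) : ℕ :=
  sInf {k : ℕ | 0 < k ∧ ∃ n0 : ℕ,
    ∀ n : ℕ, n0 ≤ n → salajanU n ≡ salajanU (n + k) [ZMOD (d : ℤ)]}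

/-- The set of eventual periods of the Salajan sequence modulo `d`. -/
def salajanS (d : ℕ) : Set ℕ :=
  {k : ℕ | 0 < k ∧ ∃ n0 : ℕ,
    ∀ n : ℕ, n0 ≤ n → salajanU n ≡ salajanU (n + k) [ZMOD (d : ℤ)]}

instance : Fact (Nat.Prime 5) := ⟨by norm_num⟩

lemma salajanRho_eq (d : ℕ) : salajanRho d = sInf (salajanS d) := rfl

lemma four_dvd_num (j : ℕ) : (4 : ℤ) ∣ 3 ^ j - 5 * (-1) ^ j := by
  have h : (3 : ℤ) - (-1) ∣ 3 ^ j - (-1) ^ j := sub_dvd_pow_sub_pow 3 (-1) j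
  norm_num at h
  have e : (3 : ℤ) ^ j - 5 * (-1) ^ j = (3 ^ j - (-1) ^ j) + 4 * (-(-1) ^ j) := by ring
  rw [e]
  exact dvd_add h ⟨-(-1) ^ j, rfl⟩

lemma four_mul_u (j : ℕ) : 4 * salajanU j = 3 ^ j - 5 * (-1) ^ j :=
  Int.mul_ediv_cancel' (four_dvd_num j)

lemma u_succ (n : ℕ) : salajanU (n + 1) = 3 * salajanU n + 5 * (-1) ^ n := by
  have h1 := four_mul_u (n + 1)
  have h2 := four_mul_u n
  have key : 4 * salajanU (n + 1) = 4 * (3 * salajanU n + 5 * (-1) ^ n) := by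
    rw [h1, pow_succ, pow_succ]
    linarith [h2]
  exact mul_left_cancel₀ (by norm_num) key

lemma cong_iff (d n k : ℕ) :
    (salajanU n ≡ salajanU (n + k) [ZMOD (d : ℤ)]) ↔
      (4 * (d : ℤ)) ∣ 3 ^ n * (3 ^ k - 1) - 5 * (-1) ^ n * ((-1) ^ k - 1) := by
  rw [Int.modEq_iff_dvd]
  have e : 4 * (salajanU (n + k) - salajanU n)
      = 3 ^ n * (3 ^ k - 1) - 5 * (-1) ^ n * ((-1) ^ k - 1) := by
    have a := four_mul_u (n + k)
    have b := four_mul_u n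
    rw [mul_sub, a, b, pow_add, pow_add]
    ring
  constructor
  · intro h
    rw [← e]
    exact mul_dvd_mul (dvd_refl 4) h
  · intro h
    rw [← e] at h
    exact (mul_dvd_mul_iff_left (by norm_num : (4 : ℤ) ≠ 0)).mp h

lemma iter_cong {d m n1 : ℕ}
    (h : ∀ n : ℕ, n1 ≤ n → salajanU n ≡ salajanU (n + m) [ZMOD (d : ℤ)]) :
    ∀ q n : ℕ, n1 ≤ n → salajanU n ≡ salajanU (n + q * m) [ZMOD (d : ℤ)] := by
  intro q
  induction q with
  | zero => intro n _; simp
  | succ q ih =>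
    intro n hn
    have h1 := ih n hn
    have h2 := h (n + q * m) (le_trans hn (Nat.le_add_right _ _))
    have e : n + q * m + m = n + (q + 1) * m := by ring
    rw [e] at h2
    exact h1.trans h2

lemma S_mul_mem {d k : ℕ} (hk : k ∈ salajanS d) {t : ℕ} (ht : 0 < t) :
    t * k ∈ salajanS d := by
  obtain ⟨hkpos, n0, hU⟩ := hk
  exact ⟨Nat.mul_pos ht hkpos, n0, fun n hn => iter_cong hU t n hn⟩

lemma S_dvd {d k : ℕ} (hne : (salajanS d).Nonempty) (hk : k ∈ salajanS d) :
    sInf (salajanS d) ∣ k := by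
  have hm := Nat.sInf_mem hne
  set m := sInf (salajanS d) with hmdef
  obtain ⟨hmpos, n1, hm1⟩ := hm
  obtain ⟨hkpos, n0, hk0⟩ := hk
  have hdm : m * (k / m) + k % m = k := Nat.div_add_mod k m
  rcases Nat.eq_zero_or_pos (k % m) with hr | hr
  · exact Nat.dvd_of_mod_eq_zero hr
  · exfalso
    have hrS : k % m ∈ salajanS d := by
      refine ⟨hr, max n0 n1, fun n hn => ?_⟩
      have hn0 : n0 ≤ n := le_trans (le_max_left _ _) hn
      have hn1 : n1 ≤ n + k % m := le_trans (le_max_right _ _) (le_trans hn (Nat.le_add_right _ _))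
      have h1 := hk0 n hn0
      have h2 := iter_cong hm1 (k / m) (n + k % m) hn1
      have e : n + k % m + k / m * m = n + k := by
        rw [Nat.add_assoc]
        congr 1
        rw [Nat.add_comm, Nat.mul_comm]
        exact hdm
      rw [e] at h2
      exact h1.trans h2.symm
    have := Nat.sInf_le hrS
    rw [← hmdef] at this
    have := Nat.mod_lt k hmpos
    omega

lemma S_mul_iff {d₁ d₂ : ℕ} (hcop : Nat.Coprime d₁ d₂) (k : ℕ) :
    k ∈ salajanS (d₁ * d₂) ↔ k ∈ salajanS d₁ ∧ k ∈ salajanS d₂ := by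
  constructor
  · rintro ⟨hkpos, n0, h⟩
    constructor
    · exact ⟨hkpos, n0, fun n hn => (h n hn).of_dvd (by push_cast; exact dvd_mul_right _ _)⟩
    · exact ⟨hkpos, n0, fun n hn => (h n hn).of_dvd (by push_cast; exact dvd_mul_left _ _)⟩
  · rintro ⟨⟨hkpos, n0, h0⟩, ⟨_, n1, h1⟩⟩
    refine ⟨hkpos, max n0 n1, fun n hn => ?_⟩
    have ha := h0 n (le_trans (le_max_left _ _) hn)
    have hb := h1 n (le_trans (le_max_right _ _) hn)
    rw [Int.modEq_iff_dvd] at ha hb ⊢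
    have hic : IsCoprime (d₁ : ℤ) (d₂ : ℤ) := by
      rw [Int.isCoprime_iff_gcd_eq_one]
      exact_mod_cast hcop
    push_cast
    exact hic.mul_dvd ha hb

lemma dvd_pow_sub_one {m k : ℕ} (h : m ∣ k) : (3 : ℤ) ^ m - 1 ∣ 3 ^ k - 1 := by
  obtain ⟨l, rfl⟩ := h
  have := sub_dvd_pow_sub_pow ((3 : ℤ) ^ m) 1 l
  simpa [pow_mul] using this

lemma two_pow_dvd (t : ℕ) (ht : 1 ≤ t) : (2 : ℤ) ^ (t + 2) ∣ 3 ^ 2 ^ t - 1 := by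
  induction t with
  | zero => omega
  | succ t ih =>
    rcases Nat.eq_zero_or_pos t with rfl | htp
    · norm_num
    · have h1 := ih htp
      have h2 : (2 : ℤ) ∣ 3 ^ 2 ^ t + 1 := by
        have : Odd ((3 : ℤ) ^ 2 ^ t) := Odd.pow ⟨1, by norm_num⟩
        obtain ⟨c, hc⟩ := this
        exact ⟨c + 1, by omega⟩
      have e : (3 : ℤ) ^ 2 ^ (t + 1) - 1 = (3 ^ 2 ^ t - 1) * (3 ^ 2 ^ t + 1) := by
        rw [pow_succ, pow_mul]
        ring
      rw [e, pow_succ]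
      exact mul_dvd_mul h1 h2

lemma exists_period (d : ℕ) (hd : 2 ≤ d) (h9 : ¬ (9 ∣ d)) :
    ∃ k ∈ salajanS d, Even k ∧ k ≤ d := by
  have hd0 : d ≠ 0 := by omega
  obtain ⟨a, d', hdd, h3d', ha⟩ : ∃ a d', 3 ^ a * d' = d ∧ ¬ 3 ∣ d' ∧ a ≤ 1 := by
    refine ⟨d.factorization 3, d / 3 ^ d.factorization 3,
      Nat.ordProj_mul_ordCompl_eq_self d 3,
      Nat.not_dvd_ordCompl Nat.prime_three hd0, ?_⟩
    by_contra hcon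
    push_neg at hcon
    refine h9 ?_
    have h32 : (3 : ℕ) ^ 2 ∣ d :=
      (Nat.Prime.pow_dvd_iff_le_factorization Nat.prime_three hd0).mpr hcon
    norm_num at h32
    exact h32
  have hd'0 : d' ≠ 0 := fun h => hd0 (by rw [← hdd, h, Nat.mul_zero])
  obtain ⟨b, s, hbs, h2s⟩ : ∃ b s, 2 ^ b * s = d' ∧ ¬ 2 ∣ s :=
    ⟨d'.factorization 2, d' / 2 ^ d'.factorization 2,
      Nat.ordProj_mul_ordCompl_eq_self d' 2,
      Nat.not_dvd_ordCompl Nat.prime_two hd'0⟩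
  have hs0 : s ≠ 0 := fun h => hd'0 (by rw [← hbs, h, Nat.mul_zero])
  have h3s : ¬ 3 ∣ s := fun h => h3d' (h.trans ⟨2 ^ b, by rw [← hbs]; ring⟩)
  obtain ⟨o, ho_pos, ho_dvd, hso⟩ : ∃ o, 0 < o ∧ o ∣ s.totient ∧ (s : ℤ) ∣ 3 ^ o - 1 := by
    have hcop3s : Nat.Coprime 3 s := (Nat.Prime.coprime_iff_not_dvd Nat.prime_three).mpr h3s
    haveI : NeZero s := ⟨hs0⟩
    refine ⟨orderOf (ZMod.unitOfCoprime 3 hcop3s), orderOf_pos _, ?_, ?_⟩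
    · rw [← ZMod.card_units_eq_totient s]
      exact orderOf_dvd_card
    · have h1 : (ZMod.unitOfCoprime 3 hcop3s) ^ orderOf (ZMod.unitOfCoprime 3 hcop3s) = 1 :=
        pow_orderOf_eq_one _
      have h2 : ((3 : ℕ) : ZMod s) ^ orderOf (ZMod.unitOfCoprime 3 hcop3s) = 1 := by
        have := congrArg (Units.val) h1
        rw [Units.val_pow_eq_pow_val, ZMod.coe_unitOfCoprime, Units.val_one] at this
        exact this
      have h3' : (3 : ZMod s) ^ orderOf (ZMod.unitOfCoprime 3 hcop3s) = 1 := by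
        exact_mod_cast h2
      have h4 : (((3 : ℤ) ^ orderOf (ZMod.unitOfCoprime 3 hcop3s) - 1 : ℤ) : ZMod s) = 0 := by
        push_cast
        rw [h3']
        ring
      exact_mod_cast (ZMod.intCast_zmod_eq_zero_iff_dvd _ s).mp h4
  set c := max 1 b with hc_def
  set K := Nat.lcm (2 ^ c) o with hK_def
  have hc1 : 1 ≤ c := le_max_left _ _
  have hKpos : 0 < K :=
    Nat.pos_of_ne_zero (Nat.lcm_ne_zero (by positivity) (by omega))
  have h2K : 2 ∣ K := dvd_trans (dvd_pow_self 2 (by omega)) (Nat.dvd_lcm_left _ _)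
  have hKeven : Even K := by
    obtain ⟨t, ht⟩ := h2K
    exact ⟨t, by omega⟩
  have h2part : (2 : ℤ) ^ (b + 2) ∣ 3 ^ K - 1 := by
    have hh1 : (2 : ℤ) ^ (c + 2) ∣ 3 ^ 2 ^ c - 1 := two_pow_dvd c hc1
    have hh2 : (3 : ℤ) ^ 2 ^ c - 1 ∣ 3 ^ K - 1 := dvd_pow_sub_one (Nat.dvd_lcm_left _ _)
    have hcb : b + 2 ≤ c + 2 := by
      have : b ≤ c := le_max_right _ _
      omega
    exact dvd_trans (dvd_trans (pow_dvd_pow 2 hcb) hh1) hh2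
  have hspart : (s : ℤ) ∣ 3 ^ K - 1 := hso.trans (dvd_pow_sub_one (Nat.dvd_lcm_right _ _))
  have hcop2s : IsCoprime ((2 : ℤ) ^ (b + 2)) (s : ℤ) := by
    have hn : Nat.Coprime (2 ^ (b + 2)) s :=
      Nat.Coprime.pow_left _ ((Nat.Prime.coprime_iff_not_dvd Nat.prime_two).mpr h2s)
    have := Nat.isCoprime_iff_coprime.mpr hn
    push_cast at this
    exact this
  have h4d' : (4 : ℤ) * (d' : ℤ) ∣ 3 ^ K - 1 := by
    have e : (4 : ℤ) * (d' : ℤ) = 2 ^ (b + 2) * (s : ℤ) := by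
      rw [← hbs]
      push_cast
      ring
    rw [e]
    exact hcop2s.mul_dvd h2part hspart
  have hmem : K ∈ salajanS d := by
    refine ⟨hKpos, 1, fun n hn => ?_⟩
    rw [cong_iff]
    rw [Even.neg_one_pow hKeven]
    simp only [sub_self, mul_zero, sub_zero]
    have e : (4 : ℤ) * (d : ℤ) = 3 ^ a * (4 * (d' : ℤ)) := by
      rw [← hdd]
      push_cast
      ring
    rw [e]
    exact mul_dvd_mul (pow_dvd_pow 3 (by omega)) h4d'
  refine ⟨K, hmem, hKeven, ?_⟩
  have hd'led : d' ≤ d := Nat.le_of_dvd (by omega) ⟨3 ^ a, by rw [← hdd]; ring⟩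
  by_cases hs1 : s = 1
  · have ho1 : o = 1 := by
      have := ho_dvd
      rw [hs1] at this
      simpa using this
    rcases Nat.eq_zero_or_pos b with hb0 | hbpos
    · have hK2 : K = 2 := by
        rw [hK_def, ho1, hc_def, hb0]
        norm_num
      omega
    · have hcb : c = b := by rw [hc_def]; omega
      have hK2 : K = 2 ^ b := by
        rw [hK_def, ho1, hcb, Nat.lcm_one_right]
      have hKd' : K = d' := by rw [hK2, ← hbs, hs1, Nat.mul_one]
      omega
  · have hs3 : 3 ≤ s := by
      rcases Nat.lt_or_ge s 3 with hlt | hge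
      · interval_cases s <;> simp_all
      · exact hge
    have hφeven : Even s.totient := Nat.totient_even (by omega)
    have hφpos : 0 < s.totient := Nat.totient_pos.mpr (by omega)
    have hφle : o ≤ s.totient := Nat.le_of_dvd hφpos ho_dvd
    have hKK : 2 * K ≤ 2 ^ c * s.totient := by
      rcases Nat.even_or_odd o with he | ho
      · have hg : 2 ∣ Nat.gcd (2 ^ c) o :=
          Nat.dvd_gcd (dvd_pow_self 2 (by omega)) he.two_dvd
        have hgl : Nat.gcd (2 ^ c) o * K = 2 ^ c * o := Nat.gcd_mul_lcm _ _
        have h2g : 2 ≤ Nat.gcd (2 ^ c) o :=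
          Nat.le_of_dvd (Nat.gcd_pos_of_pos_right _ ho_pos) hg
        calc 2 * K ≤ Nat.gcd (2 ^ c) o * K := Nat.mul_le_mul_right _ h2g
          _ = 2 ^ c * o := hgl
          _ ≤ 2 ^ c * s.totient := Nat.mul_le_mul_left _ hφle
      · have holt : 2 * o ≤ s.totient := by
          obtain ⟨t, htt⟩ := ho_dvd
          have ht2 : 2 ≤ t := by
            have hoodd := Nat.odd_iff.mp ho
            have hφe := Nat.even_iff.mp hφeven
            rcases t with _ | _ | t
            · omega
            · rw [Nat.mul_one] at htt
              omega
            · omega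
          calc 2 * o = o * 2 := by ring
            _ ≤ o * t := Nat.mul_le_mul_left _ ht2
            _ = s.totient := htt.symm
        have hlcm_le : K ≤ 2 ^ c * o :=
          Nat.le_of_dvd (by positivity) (Nat.lcm_dvd (dvd_mul_right _ _) (dvd_mul_left _ _))
        calc 2 * K ≤ 2 * (2 ^ c * o) := by omega
          _ = 2 ^ c * (2 * o) := by ring
          _ ≤ 2 ^ c * s.totient := Nat.mul_le_mul_left _ holt
    have h2cb : 2 ^ c ≤ 2 * 2 ^ b := by
      rcases Nat.eq_zero_or_pos b with hb0 | hbpos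
      · rw [hc_def, hb0]
        norm_num
      · have hcb : c = b := by rw [hc_def]; omega
        rw [hcb]
        omega
    have hfin : 2 * K ≤ 2 * d' := by
      calc 2 * K ≤ 2 ^ c * s.totient := hKK
        _ ≤ 2 ^ c * s := Nat.mul_le_mul_left _ (Nat.totient_le s)
        _ ≤ (2 * 2 ^ b) * s := Nat.mul_le_mul_right _ h2cb
        _ = 2 * (2 ^ b * s) := by ring
        _ = 2 * d' := by rw [hbs]
    omega

lemma u_mod2_step (n : ℕ) : salajanU (n + 1) ≡ salajanU n + 1 [ZMOD 2] := by
  rw [u_succ, Int.modEq_iff_dvd]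
  rcases neg_one_pow_eq_or ℤ n with h | h <;> rw [h]
  · exact ⟨-salajanU n - 2, by ring⟩
  · exact ⟨-salajanU n + 3, by ring⟩

lemma u_mod2 (n k : ℕ) : salajanU (n + k) ≡ salajanU n + k [ZMOD 2] := by
  induction k with
  | zero => simp
  | succ k ih =>
    have h2 := u_mod2_step (n + k)
    have h3 := ih.add_right 1
    have htr := h2.trans h3
    have e : n + (k + 1) = (n + k) + 1 := by omega
    rw [e]
    push_cast
    rw [← add_assoc]
    exact htr

lemma u_mod5 (n : ℕ) : salajanU n ≡ 4 * 3 ^ n [ZMOD 5] := by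
  induction n with
  | zero =>
    have h0 : salajanU 0 = -1 := by norm_num [salajanU]
    rw [h0]
    decide
  | succ n ih =>
    rw [u_succ, pow_succ]
    calc 3 * salajanU n + 5 * (-1) ^ n
        ≡ 3 * (4 * 3 ^ n) + 0 [ZMOD 5] :=
          Int.ModEq.add (ih.mul_left 3) (Int.modEq_zero_iff_dvd.mpr ⟨(-1) ^ n, rfl⟩)
      _ = 4 * (3 ^ n * 3) := by ring

lemma not_odd_mem {d k : ℕ} (hd : 2 ≤ d) (hk : k ∈ salajanS d) : ¬ Odd k := by
  intro hodd
  obtain ⟨hkpos, n0, h⟩ := hk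
  have hA : ∀ n : ℕ, n0 ≤ n → (4 * (d : ℤ)) ∣ 3 ^ n * (3 ^ k - 1) + 10 * (-1) ^ n := by
    intro n hn
    have hh := (cong_iff d n k).mp (h n hn)
    have he : ((-1 : ℤ)) ^ k = -1 := Odd.neg_one_pow hodd
    rw [he] at hh
    have e : 3 ^ n * (3 ^ k - 1) - 5 * (-1 : ℤ) ^ n * (-1 - 1)
        = 3 ^ n * (3 ^ k - 1) + 10 * (-1) ^ n := by ring
    rwa [e] at hh
  have h1 := hA n0 le_rfl
  have h2 := hA (n0 + 1) (Nat.le_succ _)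
  have h40 : (4 * (d : ℤ)) ∣ 40 * (-1) ^ n0 := by
    have e : (40 : ℤ) * (-1) ^ n0
        = 3 * (3 ^ n0 * (3 ^ k - 1) + 10 * (-1) ^ n0)
          - (3 ^ (n0 + 1) * (3 ^ k - 1) + 10 * (-1) ^ (n0 + 1)) := by
      rw [pow_succ, pow_succ]; ring
    rw [e]
    exact dvd_sub (h1.mul_left 3) h2
  have h40' : (4 * (d : ℤ)) ∣ 40 := by
    rcases neg_one_pow_eq_or ℤ n0 with hc | hc <;> rw [hc] at h40
    · simpa using h40
    · rw [mul_neg_one] at h40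
      exact (dvd_neg).mp h40
  have hd10 : d ∣ 10 := by
    have h4 : (4 : ℤ) * (d : ℤ) ∣ 4 * 10 := by norm_num at h40' ⊢; exact h40'
    have := (mul_dvd_mul_iff_left (by norm_num : (4 : ℤ) ≠ 0)).mp h4
    exact_mod_cast this
  have hcase : 2 ∣ d ∨ 5 ∣ d := by
    have hle : d ≤ 10 := Nat.le_of_dvd (by norm_num) hd10
    interval_cases d <;> revert hd10 <;> decide
  rcases hcase with hc | hc
  · have hmod := (h n0 le_rfl).of_dvd (by exact_mod_cast Int.natCast_dvd_natCast.mpr hc :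
      (2 : ℤ) ∣ (d : ℤ))
    have hpar := u_mod2 n0 k
    have hcon : salajanU n0 ≡ salajanU n0 + k [ZMOD 2] := hmod.trans hpar
    have h2k : (2 : ℤ) ∣ (k : ℤ) := by
      have := Int.ModEq.dvd hcon
      simpa using this
    have h2k' : 2 ∣ k := by exact_mod_cast h2k
    have := Nat.odd_iff.mp hodd
    omega
  · have hmod := (h n0 le_rfl).of_dvd (by exact_mod_cast Int.natCast_dvd_natCast.mpr hc :
      (5 : ℤ) ∣ (d : ℤ))
    have e1 := u_mod5 n0
    have e2 := u_mod5 (n0 + k)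
    have hcong : (4 : ℤ) * 3 ^ n0 ≡ 4 * 3 ^ (n0 + k) [ZMOD 5] := e1.symm.trans (hmod.trans e2)
    have hz : ((4 * 3 ^ n0 : ℤ) : ZMod 5) = ((4 * 3 ^ (n0 + k) : ℤ) : ZMod 5) :=
      (ZMod.intCast_eq_intCast_iff _ _ _).mpr hcong
    push_cast at hz
    rw [pow_add, ← mul_assoc] at hz
    have hne : (4 : ZMod 5) * 3 ^ n0 ≠ 0 :=
      mul_ne_zero (by decide : (4 : ZMod 5) ≠ 0) (pow_ne_zero _ (by decide : (3 : ZMod 5) ≠ 0))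
    have hpow : (3 : ZMod 5) ^ k = 1 :=
      (mul_left_cancel₀ hne (show (4 : ZMod 5) * 3 ^ n0 * 1 = 4 * 3 ^ n0 * 3 ^ k by
        rw [mul_one]; exact hz)).symm
    obtain ⟨m, hm⟩ := hodd
    rw [hm] at hpow
    have hsq : (3 : ZMod 5) ^ (2 * m + 1) = 3 * (-1 : ZMod 5) ^ m := by
      rw [pow_add, pow_mul, pow_one]
      rw [show ((3 : ZMod 5) ^ 2) = -1 by decide]
      ring
    rw [hsq] at hpow
    rcases neg_one_pow_eq_or (ZMod 5) m with hc' | hc' <;> rw [hc'] at hpow <;> revert hpow <;> decide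

theorem salajan_period_of_coprime_product (d₁ d₂ : ℕ) (h1 : 1 < d₁) (h2 : 1 < d₂)
    (hcop : Nat.Coprime d₁ d₂) (h9 : ¬ 9 ∣ d₁ * d₂) :
    salajanRho (d₁ * d₂) = Nat.lcm (salajanRho d₁) (salajanRho d₂) ∧
    2 * salajanRho (d₁ * d₂) ≤ salajanRho d₁ * salajanRho d₂ ∧
    salajanRho d₁ * salajanRho d₂ ≤ d₁ * d₂ := by
  have h9₁ : ¬ 9 ∣ d₁ := fun h => h9 (h.mul_right d₂)
  have h9₂ : ¬ 9 ∣ d₂ := fun h => h9 (h.mul_left d₁)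
  have hd : 2 ≤ d₁ * d₂ := le_trans h1 (Nat.le_mul_of_pos_right _ (by omega))
  obtain ⟨k, hkS, hkE, hkle⟩ := exists_period (d₁ * d₂) hd h9
  obtain ⟨k₁, hk₁S, _, hk₁le⟩ := exists_period d₁ h1 h9₁
  obtain ⟨k₂, hk₂S, _, hk₂le⟩ := exists_period d₂ h2 h9₂
  have hne : (salajanS (d₁ * d₂)).Nonempty := ⟨k, hkS⟩
  have hne₁ : (salajanS d₁).Nonempty := ⟨k₁, hk₁S⟩
  have hne₂ : (salajanS d₂).Nonempty := ⟨k₂, hk₂S⟩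
  have hρ : salajanRho (d₁ * d₂) ∈ salajanS (d₁ * d₂) := Nat.sInf_mem hne
  have hρ₁ : salajanRho d₁ ∈ salajanS d₁ := Nat.sInf_mem hne₁
  have hρ₂ : salajanRho d₂ ∈ salajanS d₂ := Nat.sInf_mem hne₂
  have hρ₁pos : 0 < salajanRho d₁ := hρ₁.1
  have hρ₂pos : 0 < salajanRho d₂ := hρ₂.1
  -- part 1
  have hsplit := (S_mul_iff hcop (salajanRho (d₁ * d₂))).mp hρ
  have hdvd1 : Nat.lcm (salajanRho d₁) (salajanRho d₂) ∣ salajanRho (d₁ * d₂) :=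
    Nat.lcm_dvd (S_dvd hne₁ hsplit.1) (S_dvd hne₂ hsplit.2)
  have hlcm_pos : 0 < Nat.lcm (salajanRho d₁) (salajanRho d₂) :=
    Nat.pos_of_ne_zero (Nat.lcm_ne_zero (by omega) (by omega))
  have hlcmS : Nat.lcm (salajanRho d₁) (salajanRho d₂) ∈ salajanS (d₁ * d₂) := by
    rw [S_mul_iff hcop]
    constructor
    · obtain ⟨t, ht⟩ := Nat.dvd_lcm_left (salajanRho d₁) (salajanRho d₂)
      have ht0 : 0 < t := by
        rcases Nat.eq_zero_or_pos t with rfl | h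
        · rw [Nat.mul_zero] at ht; omega
        · exact h
      rw [ht, Nat.mul_comm]
      exact S_mul_mem hρ₁ ht0
    · obtain ⟨t, ht⟩ := Nat.dvd_lcm_right (salajanRho d₁) (salajanRho d₂)
      have ht0 : 0 < t := by
        rcases Nat.eq_zero_or_pos t with rfl | h
        · rw [Nat.mul_zero] at ht; omega
        · exact h
      rw [ht, Nat.mul_comm]
      exact S_mul_mem hρ₂ ht0
  have hdvd2 : salajanRho (d₁ * d₂) ∣ Nat.lcm (salajanRho d₁) (salajanRho d₂) :=
    S_dvd hne hlcmS
  have part1 : salajanRho (d₁ * d₂) = Nat.lcm (salajanRho d₁) (salajanRho d₂) :=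
    Nat.dvd_antisymm hdvd2 hdvd1
  -- part 2
  have hev₁ : Even (salajanRho d₁) := (Nat.even_or_odd _).resolve_right (not_odd_mem h1 hρ₁)
  have hev₂ : Even (salajanRho d₂) := (Nat.even_or_odd _).resolve_right (not_odd_mem h2 hρ₂)
  have hgcd : 2 ∣ Nat.gcd (salajanRho d₁) (salajanRho d₂) :=
    Nat.dvd_gcd hev₁.two_dvd hev₂.two_dvd
  have hgcd_pos : 0 < Nat.gcd (salajanRho d₁) (salajanRho d₂) := Nat.gcd_pos_of_pos_left _ hρ₁pos
  have part2 : 2 * salajanRho (d₁ * d₂) ≤ salajanRho d₁ * salajanRho d₂ := by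
    rw [part1, ← Nat.gcd_mul_lcm (salajanRho d₁) (salajanRho d₂)]
    exact Nat.mul_le_mul_right _ (Nat.le_of_dvd hgcd_pos hgcd)
  -- part 3
  have hle₁ : salajanRho d₁ ≤ d₁ := le_trans (Nat.sInf_le hk₁S) hk₁le
  have hle₂ : salajanRho d₂ ≤ d₂ := le_trans (Nat.sInf_le hk₂S) hk₂le
  exact ⟨part1, part2, Nat.mul_le_mul hle₁ hle₂⟩
end
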